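/- For φ ∈ (0, π/2) and real x with 1 ≤ x < sec φ, the two eigenvalues of e^{iφσ_z} · [[x, √(x²−1)],[√(x²−1), x]] both have complex modulus exactly 1. -/

import Mathlib

open Matrix Complex

/-- The constant-phase SU(1,1) QSP iterate `e^{iφσ_z} V(x)`. -/
noncomputable def iterate9 (φ x : ℝ) : Matrix (Fin 2) (Fin 2) ℂ :=
  !![Complex.exp (Complex.I * φ), 0; 0, Complex.exp (-(Complex.I * φ))] *
    !![(x : ℂ), (Real.sqrt (x ^ 2 - 1) : ℂ); (Real.sqrt (x ^ 2 - 1) : ℂ), (x : ℂ)]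

/-- For `1 ≤ x < sec φ`, both eigenvalues of the iterate have modulus one. -/
theorem iterate_eigenvalues_unimodular (φ x : ℝ) (hφ : φ ∈ Set.Ioo 0 (Real.pi / 2))
    (hx : 1 ≤ x) (hsec : x < 1 / Real.cos φ) :
    ∀ μ ∈ spectrum ℂ (iterate9 φ x), ‖μ‖ = 1 := by
  intro μ hμ
  have hcos : 0 < Real.cos φ := Real.cos_pos_of_mem_Ioo
    ⟨by linarith [hφ.1, Real.pi_pos], hφ.2⟩
  have ht1 : x * Real.cos φ < 1 := by
    rw [lt_div_iff₀ hcos] at hsec; linarith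
  have ht0 : 0 < x * Real.cos φ := by positivity
  rw [spectrum.mem_iff, Matrix.isUnit_iff_isUnit_det] at hμ
  have hdet : ((algebraMap ℂ (Matrix (Fin 2) (Fin 2) ℂ)) μ - iterate9 φ x).det = 0 := by
    by_contra h
    exact hμ (isUnit_iff_ne_zero.mpr h)
  have hs2 : ((Real.sqrt (x ^ 2 - 1) : ℝ) : ℂ) ^ 2 = (x : ℂ) ^ 2 - 1 := by
    have : (Real.sqrt (x ^ 2 - 1)) ^ 2 = x ^ 2 - 1 := by
      rw [Real.sq_sqrt]; nlinarith
    rw [← Complex.ofReal_pow, this]; push_cast; ring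
  have e1 : cexp (I * ↑φ) * cexp (-(I * ↑φ)) = 1 := by
    rw [← Complex.exp_add]; simp
  have e2 : cexp (I * ↑φ) + cexp (-(I * ↑φ)) = 2 * Complex.cos ↑φ := by
    rw [Complex.cos]; ring_nf
  have key : μ ^ 2 - 2 * ((x * Real.cos φ : ℝ) : ℂ) * μ + 1 = 0 := by
    rw [iterate9, Matrix.algebraMap_eq_diagonal] at hdet
    simp [Matrix.det_fin_two, Matrix.mul_apply, Fin.sum_univ_two,
      Matrix.diagonal_apply] at hdet
    push_cast
    linear_combination hdet + (x : ℂ) * μ * e2 - e1 +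
      (cexp (I * ↑φ) * cexp (-(I * ↑φ))) * hs2
  set t := x * Real.cos φ with htdef
  have hre : μ.re ^ 2 - μ.im ^ 2 - 2 * t * μ.re + 1 = 0 ∧
      2 * μ.re * μ.im - 2 * t * μ.im = 0 := by
    have h1 := congrArg Complex.re key
    have h2 := congrArg Complex.im key
    simp [pow_two, Complex.mul_re, Complex.mul_im] at h1 h2
    constructor <;> nlinarith [h1, h2]
  obtain ⟨h1, h2⟩ := hre
  rcases eq_or_ne μ.im 0 with hb | hb
  · exfalso
    rw [hb] at h1
    nlinarith [sq_nonneg (μ.re - t)]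
  · have ha : μ.re = t := by
      have h3 : μ.im * (μ.re - t) = 0 := by linear_combination h2 / 2
      rcases mul_eq_zero.mp h3 with h | h
      · exact absurd h hb
      · linarith
    have : μ.re * μ.re + μ.im * μ.im = 1 := by nlinarith
    rw [Complex.norm_def, Complex.normSq_apply, this, Real.sqrt_one]
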